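/- The Cantor–Bendixson rank of a countable nonempty set of tilings is not the successor of a limit ordinal: let τ = (Q, 𝒜) be a tile-set whose set of tilings S = 𝒯_τ is nonempty and countable, and let α be the least ordinal with S^{(α)} = ∅; then there is no limit ordinal β with α = β + 1. -/

import Mathlib

open Set

/-- A configuration assigns a state to each cell of the plane. -/
abbrev Config (Q : Type*) : Type _ := (ℤ × ℤ) → Q

/-- The shift by a vector `v`: `σ_v c = fun x => c (x + v)`. -/
def shiftC {Q : Type*} (v : ℤ × ℤ) (c : Config Q) : Config Q := fun x => c (x + v)

/-- The pattern `P` with (finite) domain `V` appears in `c` at translate `t`. -/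
def AppearsAt {Q : Type*} (c : Config Q) (V : Finset (ℤ × ℤ)) (P : (ℤ × ℤ) → Q)
    (t : ℤ × ℤ) : Prop :=
  ∀ x ∈ V, c (x + t) = P x

/-- The pattern `P` with (finite) domain `V` appears in `c`. -/
def Appears {Q : Type*} (c : Config Q) (V : Finset (ℤ × ℤ)) (P : (ℤ × ℤ) → Q) : Prop :=
  ∃ t : ℤ × ℤ, AppearsAt c V P t

/-- The pattern preorder: `x ≼ y` iff every pattern appearing in `x` appears in `y`. -/
def PatLe {Q : Type*} (x y : Config Q) : Prop :=
  ∀ (V : Finset (ℤ × ℤ)) (P : (ℤ × ℤ) → Q), Appears x V P → Appears y V P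

/-- A set of configurations is shift-invariant. -/
def ShiftInvariant {Q : Type*} (S : Set (Config Q)) : Prop :=
  ∀ c ∈ S, ∀ v : ℤ × ℤ, shiftC v c ∈ S

/-- `c` is an isolated point of `S` (in the subspace topology). -/
def IsolatedIn {Q : Type*} [TopologicalSpace Q] (S : Set (Config Q)) (c : Config Q) : Prop :=
  ∃ U : Set (Config Q), IsOpen U ∧ U ∩ S = {c}

/-- The topological derivative: the non-isolated points of `S`. -/
def derivSet {Q : Type*} [TopologicalSpace Q] (S : Set (Config Q)) : Set (Config Q) :=
  {c ∈ S | ¬ IsolatedIn S c}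

/-- Transfinite iteration of the topological derivative (Cantor–Bendixson). -/
noncomputable def CBIter {Q : Type*} [TopologicalSpace Q] (S : Set (Config Q))
    (o : Ordinal) : Set (Config Q) :=
  Ordinal.limitRecOn o S (fun _ ih => derivSet ih)
    (fun o _ ih => ⋂ (β : {β : Ordinal // β < o}), ih β.1 β.2)

/-- The Cantor–Bendixson rank of `c` in `S`: least `λ` with `c ∉ S^{(λ)}`. -/
noncomputable def CBRank {Q : Type*} [TopologicalSpace Q] (S : Set (Config Q))
    (c : Config Q) : Ordinal :=
  sInf {l : Ordinal | c ∉ CBIter S l}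

/-- A configuration is periodic iff its shift orbit is finite (equivalently, its
stabilizer has finite index in `ℤ²`). -/
def IsPeriodic {Q : Type*} (c : Config Q) : Prop :=
  (Set.range fun v : ℤ × ℤ => shiftC v c).Finite

/-- `c` is a tiling for the tile-set with domain `V` and allowed patterns `A`. -/
def IsTiling {Q : Type*} (V : Finset (ℤ × ℤ)) (A : Set ({x // x ∈ V} → Q))
    (c : Config Q) : Prop :=
  ∀ t : ℤ × ℤ, (fun y : {x // x ∈ V} => c (t + y.1)) ∈ A

/-- The set of tilings of a tile-set. -/
def Tilings {Q : Type*} (V : Finset (ℤ × ℤ)) (A : Set ({x // x ∈ V} → Q)) :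
    Set (Config Q) :=
  {c | IsTiling V A c}

section AuxStmt16
variable {Q : Type*}

lemma shiftC_zero (c : Config Q) : shiftC 0 c = c := by
  funext x; simp [shiftC]

lemma shiftC_shiftC (v w : ℤ × ℤ) (c : Config Q) :
    shiftC v (shiftC w c) = shiftC (w + v) c := by
  funext x
  show c (x + v + w) = c (x + (w + v))
  rw [add_assoc, add_comm v w]

lemma shiftC_injective (v : ℤ × ℤ) : Function.Injective (shiftC (Q := Q) v) := by
  intro a b h
  have h2 := congrArg (shiftC (-v)) h
  rwa [shiftC_shiftC, shiftC_shiftC, add_neg_cancel, shiftC_zero, shiftC_zero] at h2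

lemma continuous_shiftC [TopologicalSpace Q] (v : ℤ × ℤ) :
    Continuous (shiftC (Q := Q) v) :=
  continuous_pi fun x => continuous_apply (x + v)

lemma derivSet_subset [TopologicalSpace Q] (S : Set (Config Q)) : derivSet S ⊆ S :=
  fun _ h => h.1

lemma isClosed_derivSet [TopologicalSpace Q] {S : Set (Config Q)} (hS : IsClosed S) :
    IsClosed (derivSet S) := by
  rw [← isOpen_compl_iff, isOpen_iff_forall_mem_open]
  intro x hx
  by_cases hxS : x ∈ S
  · have hiso : IsolatedIn S x := by
      by_contra hni
      exact hx ⟨hxS, hni⟩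
    obtain ⟨U, hUo, hUS⟩ := hiso
    refine ⟨U, ?_, hUo, ?_⟩
    · intro y hyU hyd
      have : y ∈ U ∩ S := ⟨hyU, hyd.1⟩
      rw [hUS] at this
      rw [this] at hyd
      exact hyd.2 ⟨U, hUo, hUS⟩
    · have : x ∈ U ∩ S := by rw [hUS]; rfl
      exact this.1
  · exact ⟨Sᶜ, fun y hy hyd => hy hyd.1, hS.isOpen_compl, hxS⟩

lemma shiftInvariant_derivSet [TopologicalSpace Q] {S : Set (Config Q)}
    (hS : ShiftInvariant S) : ShiftInvariant (derivSet S) := by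
  rintro c ⟨hcS, hni⟩ v
  refine ⟨hS c hcS v, ?_⟩
  rintro ⟨U, hUo, hUS⟩
  apply hni
  refine ⟨shiftC v ⁻¹' U, hUo.preimage (continuous_shiftC v), ?_⟩
  ext y
  constructor
  · rintro ⟨hyU, hyS⟩
    have : shiftC v y ∈ U ∩ S := ⟨hyU, hS y hyS v⟩
    rw [hUS, mem_singleton_iff] at this
    exact shiftC_injective v this
  · intro hy
    rw [mem_singleton_iff] at hy
    have hm : shiftC v c ∈ U ∩ S := by rw [hUS]; rfl
    rw [hy]
    exact ⟨hm.1, hcS⟩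

lemma CBIter_zero [TopologicalSpace Q] (S : Set (Config Q)) : CBIter S 0 = S :=
  Ordinal.limitRecOn_zero _ _ _

lemma CBIter_succ [TopologicalSpace Q] (S : Set (Config Q)) (o : Ordinal) :
    CBIter S (o + 1) = derivSet (CBIter S o) := by
  unfold CBIter
  rw [Ordinal.add_one_eq_succ, Ordinal.limitRecOn_succ]

lemma CBIter_limit [TopologicalSpace Q] (S : Set (Config Q)) {o : Ordinal}
    (ho : Order.IsSuccLimit o) : CBIter S o = ⋂ (β : {β : Ordinal // β < o}), CBIter S β.1 := by
  unfold CBIter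
  rw [Ordinal.limitRecOn_limit _ _ _ _ ho]

lemma CBIter_anti [TopologicalSpace Q] (S : Set (Config Q)) {γ o : Ordinal}
    (h : γ ≤ o) : CBIter S o ⊆ CBIter S γ := by
  induction o using Ordinal.limitRecOn with
  | zero =>
    rw [nonpos_iff_eq_zero] at h
    subst h; rfl
  | add_one o ih =>
    rcases h.lt_or_eq with hlt | rfl
    · rw [Order.lt_add_one_iff] at hlt
      rw [CBIter_succ]
      exact (derivSet_subset _).trans (ih hlt)
    · rfl
  | limit o ho ih =>
    rcases h.lt_or_eq with hlt | rfl
    · rw [CBIter_limit S ho]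
      exact iInter_subset (fun (β : {β : Ordinal // β < o}) => CBIter S β.1) ⟨γ, hlt⟩
    · rfl

lemma CBIter_isClosed [TopologicalSpace Q] {S : Set (Config Q)} (hS : IsClosed S)
    (o : Ordinal) : IsClosed (CBIter S o) := by
  induction o using Ordinal.limitRecOn with
  | zero => rwa [CBIter_zero]
  | add_one o ih =>
    rw [CBIter_succ]
    exact isClosed_derivSet ih
  | limit o ho ih =>
    rw [CBIter_limit S ho]
    exact isClosed_iInter fun β => ih β.1 β.2

lemma CBIter_shiftInvariant [TopologicalSpace Q] {S : Set (Config Q)}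
    (hS : ShiftInvariant S) (o : Ordinal) : ShiftInvariant (CBIter S o) := by
  induction o using Ordinal.limitRecOn with
  | zero => rwa [CBIter_zero]
  | add_one o ih =>
    rw [CBIter_succ]
    exact shiftInvariant_derivSet ih
  | limit o ho ih =>
    intro c hc v
    rw [CBIter_limit S ho] at hc ⊢
    rw [mem_iInter] at hc ⊢
    exact fun β => ih β.1 β.2 c (hc β) v

lemma isClosed_tilings [TopologicalSpace Q] [DiscreteTopology Q]
    (V : Finset (ℤ × ℤ)) (A : Set ({x // x ∈ V} → Q)) : IsClosed (Tilings V A) := by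
  have hrw : Tilings V A
      = ⋂ t : ℤ × ℤ, (fun c : Config Q => (fun y : {x // x ∈ V} => c (t + y.1))) ⁻¹' A := by
    ext c
    simp [Tilings, IsTiling, mem_iInter, Set.mem_preimage]
  rw [hrw]
  refine isClosed_iInter fun t => ?_
  have hcont : Continuous fun (c : Config Q) (y : {x // x ∈ V}) => c (t + y.1) :=
    continuous_pi fun y => continuous_apply _
  exact (isClosed_discrete A).preimage hcont

lemma shiftInvariant_tilings (V : Finset (ℤ × ℤ)) (A : Set ({x // x ∈ V} → Q)) :
    ShiftInvariant (Tilings V A) := by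
  intro c hc v t
  have h : (fun y : {x // x ∈ V} => shiftC v c (t + y.1))
      = fun y : {x // x ∈ V} => c ((t + v) + y.1) := by
    funext y
    show c (t + y.1 + v) = c (t + v + y.1)
    rw [add_right_comm]
  rw [h]
  exact hc (t + v)

lemma finite_of_isolated [TopologicalSpace Q] {S : Set (Config Q)} (hS : IsCompact S)
    (h : ∀ c ∈ S, IsolatedIn S c) : S.Finite := by
  classical
  have h' : ∀ c : S, IsolatedIn S c.1 := fun c => h c.1 c.2
  choose U hUo hUS using h'
  have hcov : S ⊆ ⋃ i, U i := by
    intro s hs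
    have : s ∈ U ⟨s, hs⟩ ∩ S := by rw [hUS]; rfl
    exact mem_iUnion.2 ⟨⟨s, hs⟩, this.1⟩
  obtain ⟨t, ht⟩ := hS.elim_finite_subcover U hUo hcov
  refine Set.Finite.subset (t.image Subtype.val).finite_toSet ?_
  intro s hs
  obtain ⟨i, hit, hsU⟩ := Set.mem_iUnion₂.1 (ht hs)
  have : s ∈ U i ∩ S := ⟨hsU, hs⟩
  rw [hUS, mem_singleton_iff] at this
  subst this
  exact Finset.mem_coe.2 (Finset.mem_image_of_mem _ hit)

lemma period_smul {c : Config Q} {v : ℤ × ℤ} (h : ∀ x, c (x + v) = c x) :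
    ∀ (j : ℤ) (x), c (x + j • v) = c x := by
  have h' : ∀ x, c (x - v) = c x := by
    intro x
    have := h (x - v)
    rw [sub_add_cancel] at this
    exact this.symm
  intro j
  induction j using Int.induction_on with
  | zero => simp
  | succ k ih =>
    intro x
    have harg : x + ((k : ℤ) + 1) • v = (x + v) + (k : ℤ) • v := by
      rw [add_smul, one_smul]; abel
    rw [harg, ih, h]
  | pred k ih =>
    intro x
    have harg : x + (-(k : ℤ) - 1) • v = (x - v) + (-(k : ℤ)) • v := by
      rw [sub_smul, one_smul]; abel
    rw [harg, ih, h']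

lemma period_both {c : Config Q} {L : ℤ} (hH : ∀ x, c (x + (L, 0)) = c x)
    (hV : ∀ x, c (x + (0, L)) = c x) :
    ∀ (a b : ℤ) (x), c (x + (L * a, L * b)) = c x := by
  intro a b x
  have harg : x + (L * a, L * b) = (x + b • ((0 : ℤ), L)) + a • ((L : ℤ), (0 : ℤ)) := by
    refine Prod.ext ?_ ?_ <;> simp [smul_eq_mul] <;> ring
  rw [harg, period_smul hH, period_smul hV]

/-- From a finite shift-invariant set, a common two-directional period. -/
lemma exists_period {S : Set (Config Q)} (hfin : S.Finite) (hinv : ShiftInvariant S)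
    {c : Config Q} (hc : c ∈ S) :
    ∃ N : ℕ, 0 < N ∧ ∀ (a b : ℤ) (x), c (x + ((N : ℤ) * a, (N : ℤ) * b)) = c x := by
  have horbit : (Set.range fun v : ℤ × ℤ => shiftC v c).Finite :=
    hfin.subset (by rintro _ ⟨v, rfl⟩; exact hinv c hc v)
  have hper : ∀ g : ℤ → ℤ × ℤ, (∀ s t : ℤ, g s - g t = g (s - t)) →
      ∃ k : ℤ, k ≠ 0 ∧ ∀ x, c (x + g k) = c x := by
    intro g hgsub
    have hmaps : Set.MapsTo (fun k : ℤ => shiftC (g k) c) Set.univ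
        (Set.range fun v : ℤ × ℤ => shiftC v c) := fun k _ => ⟨g k, rfl⟩
    obtain ⟨a, -, b, -, hab, hfeq⟩ :=
      Set.infinite_univ.exists_ne_map_eq_of_mapsTo hmaps horbit
    refine ⟨a - b, sub_ne_zero.2 hab, fun x => ?_⟩
    have h1 := congrFun hfeq (x - g b)
    have e1 : x - g b + g a = x + g (a - b) := by
      rw [← hgsub]; abel
    have e2 : x - g b + g b = x := by abel
    simpa [shiftC, e1, e2] using h1
  obtain ⟨k1, hk1, hpk1⟩ := hper (fun k => (k, 0)) (fun s t => by simp [Prod.ext_iff])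
  obtain ⟨k2, hk2, hpk2⟩ := hper (fun k => (0, k)) (fun s t => by simp [Prod.ext_iff])
  refine ⟨(k1 * k2).natAbs, Int.natAbs_pos.2 (mul_ne_zero hk1 hk2), ?_⟩
  have hH : ∀ x, c (x + ((((k1 * k2).natAbs : ℤ)), 0)) = c x := by
    intro x
    rcases Int.natAbs_eq (k1 * k2) with h | h
    · have hv := period_smul hpk1 k2 x
      have e : k2 • ((k1 : ℤ), (0 : ℤ)) = (((k1 * k2).natAbs : ℤ), 0) := by
        have e0 : k2 • ((k1 : ℤ), (0 : ℤ)) = (k2 * k1, k2 * 0) := rfl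
        rw [e0, mul_zero, Int.mul_comm k2 k1]
        exact Prod.ext h rfl
      rwa [e] at hv
    · have hv := period_smul hpk1 (-k2) x
      have e : (-k2) • ((k1 : ℤ), (0 : ℤ)) = (((k1 * k2).natAbs : ℤ), 0) := by
        have e0 : (-k2) • ((k1 : ℤ), (0 : ℤ)) = (-k2 * k1, -k2 * 0) := rfl
        rw [e0, mul_zero, neg_mul, Int.mul_comm k2 k1]
        refine Prod.ext ?_ rfl
        show -(k1 * k2) = ((k1 * k2).natAbs : ℤ)
        linarith
      rwa [e] at hv
  have hV : ∀ x, c (x + (0, (((k1 * k2).natAbs : ℤ)))) = c x := by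
    intro x
    rcases Int.natAbs_eq (k1 * k2) with h | h
    · have hv := period_smul hpk2 k1 x
      have e : k1 • ((0 : ℤ), (k2 : ℤ)) = (0, ((k1 * k2).natAbs : ℤ)) := by
        have e0 : k1 • ((0 : ℤ), (k2 : ℤ)) = (k1 * 0, k1 * k2) := rfl
        rw [e0, mul_zero]
        exact Prod.ext rfl h
      rwa [e] at hv
    · have hv := period_smul hpk2 (-k1) x
      have e : (-k1) • ((0 : ℤ), (k2 : ℤ)) = (0, ((k1 * k2).natAbs : ℤ)) := by
        have e0 : (-k1) • ((0 : ℤ), (k2 : ℤ)) = (-k1 * 0, -k1 * k2) := rfl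
        rw [e0, mul_zero, neg_mul]
        refine Prod.ext rfl ?_
        show -(k1 * k2) = ((k1 * k2).natAbs : ℤ)
        linarith
      rwa [e] at hv
  exact period_both hH hV

end AuxStmt16

section MainAux
variable {Q : Type*}

noncomputable def boxF (k : ℕ) : Finset (ℤ × ℤ) := Finset.Icc (-(k : ℤ), -(k : ℤ)) ((k : ℤ), (k : ℤ))

noncomputable def boxAt (m : ℤ × ℤ) (k : ℕ) : Finset (ℤ × ℤ) :=
  Finset.Icc (m - ((k : ℤ), (k : ℤ))) (m + ((k : ℤ), (k : ℤ)))

lemma mem_boxF {k : ℕ} {x : ℤ × ℤ} :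
    x ∈ boxF k ↔ -(k : ℤ) ≤ x.1 ∧ x.1 ≤ k ∧ -(k : ℤ) ≤ x.2 ∧ x.2 ≤ k := by
  simp [boxF, Finset.mem_Icc, Prod.le_def]
  tauto

lemma mem_boxAt {m : ℤ × ℤ} {k : ℕ} {x : ℤ × ℤ} :
    x ∈ boxAt m k ↔ m.1 - k ≤ x.1 ∧ x.1 ≤ m.1 + k ∧ m.2 - k ≤ x.2 ∧ x.2 ≤ m.2 + k := by
  simp [boxAt, Finset.mem_Icc, Prod.le_def]
  tauto

def Kset (c : Config Q) (N n : ℕ) : Set (Config Q) :=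
  {z | ¬ ∀ x ∈ boxF N, z x = c x} ∩
    ⋃ m : {m : ℤ × ℤ // m ∈ boxF (n + N)}, {z | ∀ x ∈ boxAt m.1 n, z x = c x}

lemma isOpen_agree [TopologicalSpace Q] [DiscreteTopology Q] (c : Config Q)
    (F : Finset (ℤ × ℤ)) : IsOpen {z : Config Q | ∀ x ∈ F, z x = c x} := by
  have hrw : {z : Config Q | ∀ x ∈ F, z x = c x}
      = ⋂ x ∈ F, (fun z : Config Q => z x) ⁻¹' {c x} := by
    ext z; simp
  rw [hrw]
  exact isOpen_biInter_finset fun x _ => (isOpen_discrete _).preimage (continuous_apply x)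

lemma isClosed_agree [TopologicalSpace Q] [DiscreteTopology Q] (c : Config Q)
    (F : Finset (ℤ × ℤ)) : IsClosed {z : Config Q | ∀ x ∈ F, z x = c x} := by
  have hrw : {z : Config Q | ∀ x ∈ F, z x = c x}
      = ⋂ x ∈ F, (fun z : Config Q => z x) ⁻¹' {c x} := by
    ext z; simp
  rw [hrw]
  exact isClosed_biInter fun x _ => (isClosed_discrete _).preimage (continuous_apply x)

lemma isClosed_Kset [TopologicalSpace Q] [DiscreteTopology Q] (c : Config Q) (N n : ℕ) :
    IsClosed (Kset c N n) := by
  refine IsClosed.inter ?_ ?_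
  · exact (isOpen_agree c (boxF N)).isClosed_compl
  · exact isClosed_iUnion_of_finite fun m => isClosed_agree c (boxAt m.1 n)

/-- The key construction: a configuration in `CBIter T γ` that differs from `c`
near the origin but agrees with `c` on a large box not too far away. -/
lemma exists_in_Kset [TopologicalSpace Q] [DiscreteTopology Q] {T : Set (Config Q)}
    (hTinv : ShiftInvariant T) {β : Ordinal} (hβ : Order.IsSuccLimit β) {c : Config Q}
    (hcγ : ∀ γ < β, c ∈ CBIter T γ) {N : ℕ} (hN : 0 < N)
    (hcper : ∀ (a b : ℤ) (x), c (x + ((N : ℤ) * a, (N : ℤ) * b)) = c x)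
    {γ : Ordinal} (hγ : γ < β) (n : ℕ) :
    ∃ z ∈ CBIter T γ, (¬ ∀ x ∈ boxF N, z x = c x) ∧
      ∀ n' ≤ n, ∃ m ∈ boxF (n' + N), ∀ x ∈ boxAt m n', z x = c x := by
  have hsucc : γ + 1 < β := by
    rw [Ordinal.add_one_eq_succ]; exact hβ.succ_lt hγ
  have hc1 : c ∈ derivSet (CBIter T γ) := by
    rw [← CBIter_succ]; exact hcγ _ hsucc
  obtain ⟨hcγ', hni⟩ := hc1
  -- a nearby distinct point of CBIter T γ
  have hUne : {y : Config Q | ∀ x ∈ boxF n, y x = c x} ∩ CBIter T γ ≠ {c} :=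
    fun h => hni ⟨_, isOpen_agree c (boxF n), h⟩
  have hsub : {c} ⊆ {y : Config Q | ∀ x ∈ boxF n, y x = c x} ∩ CBIter T γ := by
    rw [Set.singleton_subset_iff]
    exact ⟨fun x _ => rfl, hcγ'⟩
  obtain ⟨y, hyUS, hyne⟩ := Set.exists_of_ssubset (hsub.ssubset_of_ne (Ne.symm hUne))
  have hyU : ∀ x ∈ boxF n, y x = c x := hyUS.1
  have hyγ : y ∈ CBIter T γ := hyUS.2
  have hync : y ≠ c := fun h => hyne (by rw [h]; rfl)
  obtain ⟨x0, hx0⟩ : ∃ x, y x ≠ c x := Function.ne_iff.1 hync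
  -- minimal-norm difference point
  set D : Set ℕ := {k : ℕ | ∃ x : ℤ × ℤ, max x.1.natAbs x.2.natAbs = k ∧ y x ≠ c x} with hD
  have hDne : D.Nonempty := ⟨_, x0, rfl, hx0⟩
  obtain ⟨d, hdr, hd⟩ := Nat.sInf_mem hDne
  set r : ℕ := sInf D with hr
  have hmin : ∀ x : ℤ × ℤ, y x ≠ c x → r ≤ max x.1.natAbs x.2.natAbs :=
    fun x hx => Nat.sInf_le ⟨x, rfl, hx⟩
  have hagy : ∀ x : ℤ × ℤ, max x.1.natAbs x.2.natAbs < r → y x = c x := by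
    intro x hx
    by_contra h
    exact absurd (hmin x h) (not_le.2 hx)
  have hrn : n < r := by
    by_contra h
    push_neg at h
    exact hd (hyU d (mem_boxF.2 (by omega)))
  -- division data
  have hNZ : ((N : ℤ)) ≠ 0 := by exact_mod_cast hN.ne'
  have hNpos : (0 : ℤ) < (N : ℤ) := by exact_mod_cast hN
  obtain ⟨v1, a1, hv1a, e1, hde1, he1n, he1N⟩ :
      ∃ v1 a1, v1 = (N : ℤ) * a1 ∧ ∃ e1, v1 + e1 = d.1 ∧ 0 ≤ e1 ∧ e1 < N :=
    ⟨(N : ℤ) * (d.1 / N), d.1 / N, rfl, d.1 % N, Int.mul_ediv_add_emod d.1 N,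
      Int.emod_nonneg d.1 hNZ, Int.emod_lt_of_pos d.1 hNpos⟩
  obtain ⟨v2, a2, hv2a, e2, hde2, he2n, he2N⟩ :
      ∃ v2 a2, v2 = (N : ℤ) * a2 ∧ ∃ e2, v2 + e2 = d.2 ∧ 0 ≤ e2 ∧ e2 < N :=
    ⟨(N : ℤ) * (d.2 / N), d.2 / N, rfl, d.2 % N, Int.mul_ediv_add_emod d.2 N,
      Int.emod_nonneg d.2 hNZ, Int.emod_lt_of_pos d.2 hNpos⟩
  have hvper : ∀ x, c (x + (v1, v2)) = c x := by
    intro x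
    rw [hv1a, hv2a]
    exact hcper a1 a2 x
  refine ⟨shiftC (v1, v2) y, CBIter_shiftInvariant hTinv γ y hyγ (v1, v2), ?_, ?_⟩
  · -- difference on the small box
    intro hall
    apply hd
    have hmem : ((e1, e2) : ℤ × ℤ) ∈ boxF N := mem_boxF.2 (by simp; omega)
    have h1 : shiftC (v1, v2) y (e1, e2) = c (e1, e2) := hall _ hmem
    have hev : ((e1, e2) : ℤ × ℤ) + (v1, v2) = d := by
      refine Prod.ext ?_ ?_ <;> simp <;> omega
    have h2 : shiftC (v1, v2) y (e1, e2) = y d := by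
      show y ((e1, e2) + (v1, v2)) = y d
      rw [hev]
    have h3 : c (e1, e2) = c d := by
      rw [← hvper (e1, e2), hev]
    rw [h2, h3] at h1
    exact h1
  · -- agreement on a large box nearby
    intro n' hn'
    have hd1r : d.1.natAbs ≤ r := by omega
    have hd2r : d.2.natAbs ≤ r := by omega
    refine ⟨(-v1 + max (-((r : ℤ) - 1 - n')) (min v1 ((r : ℤ) - 1 - n')),
             -v2 + max (-((r : ℤ) - 1 - n')) (min v2 ((r : ℤ) - 1 - n'))),
            mem_boxF.2 (by simp; omega), ?_⟩
    intro x hx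
    rw [mem_boxAt] at hx
    simp only at hx
    show y (x + (v1, v2)) = c x
    have harg : y (x + (v1, v2)) = c (x + (v1, v2)) := by
      apply hagy
      have h1 : (x + (v1, v2)).1 = x.1 + v1 := rfl
      have h2 : (x + (v1, v2)).2 = x.2 + v2 := rfl
      rw [h1, h2]
      omega
    rw [harg, hvper]

end MainAux

/-- The Cantor–Bendixson rank of a countable nonempty set of
tilings is not the successor of a limit ordinal. -/
theorem stmt16 {Q : Type*} [Fintype Q] [Nonempty Q] [TopologicalSpace Q] [DiscreteTopology Q]
    (V : Finset (ℤ × ℤ)) (A : Set ({x // x ∈ V} → Q))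
    (hne : (Tilings V A).Nonempty) (hcount : (Tilings V A).Countable)
    (α : Ordinal) (hempty : CBIter (Tilings V A) α = ∅)
    (hleast : ∀ β < α, CBIter (Tilings V A) β ≠ ∅) :
    ¬ ∃ β : Ordinal, Order.IsSuccLimit β ∧ α = β + 1 := by
  rintro ⟨β, hβlim, rfl⟩
  set T := Tilings V A with hT
  have hTclosed : IsClosed T := isClosed_tilings V A
  have hTcompact : IsCompact T := hTclosed.isCompact
  have hTinv : ShiftInvariant T := shiftInvariant_tilings V A
  -- the β-th derivative is nonempty, finite, shift-invariant
  have hSβne : (CBIter T β).Nonempty := by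
    rw [Set.nonempty_iff_ne_empty]
    exact hleast β (by rw [Ordinal.add_one_eq_succ]; exact Order.lt_succ β)
  have hderiv : derivSet (CBIter T β) = ∅ := by
    rw [← CBIter_succ]; exact hempty
  have hiso : ∀ c ∈ CBIter T β, IsolatedIn (CBIter T β) c := by
    intro c hc
    by_contra hni
    have hmem : c ∈ derivSet (CBIter T β) := ⟨hc, hni⟩
    rw [hderiv] at hmem
    exact hmem
  have hSβfin : (CBIter T β).Finite :=
    finite_of_isolated ((CBIter_isClosed hTclosed β).isCompact) hiso
  have hSβinv : ShiftInvariant (CBIter T β) := CBIter_shiftInvariant hTinv β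
  obtain ⟨c, hcβ⟩ := hSβne
  obtain ⟨N, hN, hcper⟩ := exists_period hSβfin hSβinv hcβ
  have hcγ : ∀ γ < β, c ∈ CBIter T γ := fun γ hγ => CBIter_anti T hγ.le hcβ
  -- the compactness argument
  let ι := {γ : Ordinal // γ < β} × ℕ
  let tt : ι → Set (Config Q) := fun i => CBIter T i.1.1 ∩ Kset c N i.2
  have htc : ∀ i, IsClosed (tt i) :=
    fun i => (CBIter_isClosed hTclosed _).inter (isClosed_Kset c N _)
  have hne2 : (T ∩ ⋂ i, tt i).Nonempty := by
    rw [Set.nonempty_iff_ne_empty]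
    intro hE
    obtain ⟨u, hu⟩ := hTcompact.elim_finite_subfamily_closed tt htc hE
    have hγsup : u.sup (fun i => i.1.1) < β := by
      refine (Finset.sup_lt_iff ?_).2 fun i _ => i.1.2
      exact Ordinal.bot_eq_zero ▸ hβlim.pos
    obtain ⟨z, hzγ, hzdiff, hzbox⟩ :=
      exists_in_Kset hTinv hβlim hcγ hN hcper hγsup (u.sup fun i => i.2)
    have hzT : z ∈ T := by
      have h0 := CBIter_anti T zero_le hzγ
      rwa [CBIter_zero] at h0
    have hzmem : z ∈ T ∩ ⋂ i ∈ u, tt i := by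
      refine ⟨hzT, Set.mem_iInter₂.2 fun i hi => ⟨?_, hzdiff, ?_⟩⟩
      · exact CBIter_anti T (Finset.le_sup (f := fun i : ι => i.1.1) hi) hzγ
      · obtain ⟨m, hm, hag⟩ := hzbox i.2 (Finset.le_sup hi)
        exact Set.mem_iUnion.2 ⟨⟨m, hm⟩, hag⟩
    rw [hu] at hzmem
    exact hzmem
  obtain ⟨z, hzT, hziI⟩ := hne2
  rw [Set.mem_iInter] at hziI
  have hzβ : z ∈ CBIter T β := by
    rw [CBIter_limit T hβlim]
    exact Set.mem_iInter.2 fun γs => (hziI ⟨γs, 0⟩).1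
  obtain ⟨M, hM, hzper⟩ := exists_period hSβfin hSβinv hzβ
  have hLZ : ((N * M : ℕ) : ℤ) = (N : ℤ) * (M : ℤ) := by push_cast; ring
  have hLpos : (0 : ℤ) < ((N * M : ℕ) : ℤ) := by
    have := Nat.mul_pos hN hM
    exact_mod_cast this
  obtain ⟨hzdiff, hzbox⟩ := (hziI ⟨⟨0, hβlim.pos⟩, N * M⟩).2
  obtain ⟨⟨m, hm⟩, hag⟩ := Set.mem_iUnion.1 hzbox
  -- z and c agree everywhere since both have period N*M and agree on a large box
  have heq : ∀ x : ℤ × ℤ, z x = c x := by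
    intro x
    obtain ⟨q1, t1, hq1, ht1n, ht1l⟩ :
        ∃ q1 t1 : ℤ, ((N * M : ℕ) : ℤ) * q1 + t1 = x.1 - m.1 ∧ 0 ≤ t1 ∧ t1 < ((N * M : ℕ) : ℤ) :=
      ⟨(x.1 - m.1) / ((N * M : ℕ) : ℤ), (x.1 - m.1) % ((N * M : ℕ) : ℤ),
        Int.mul_ediv_add_emod _ _, Int.emod_nonneg _ hLpos.ne', Int.emod_lt_of_pos _ hLpos⟩
    obtain ⟨q2, t2, hq2, ht2n, ht2l⟩ :
        ∃ q2 t2 : ℤ, ((N * M : ℕ) : ℤ) * q2 + t2 = x.2 - m.2 ∧ 0 ≤ t2 ∧ t2 < ((N * M : ℕ) : ℤ) :=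
      ⟨(x.2 - m.2) / ((N * M : ℕ) : ℤ), (x.2 - m.2) % ((N * M : ℕ) : ℤ),
        Int.mul_ediv_add_emod _ _, Int.emod_nonneg _ hLpos.ne', Int.emod_lt_of_pos _ hLpos⟩
    have hx'mem : ((m.1 + t1, m.2 + t2) : ℤ × ℤ) ∈ boxAt m (N * M) := by
      rw [mem_boxAt]
      refine ⟨?_, ?_, ?_, ?_⟩
      · show m.1 - ((N * M : ℕ) : ℤ) ≤ m.1 + t1
        linarith
      · show m.1 + t1 ≤ m.1 + ((N * M : ℕ) : ℤ)
        linarith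
      · show m.2 - ((N * M : ℕ) : ℤ) ≤ m.2 + t2
        linarith
      · show m.2 + t2 ≤ m.2 + ((N * M : ℕ) : ℤ)
        linarith
    have hzx : z x = z (m.1 + t1, m.2 + t2) := by
      have hper := hzper ((N : ℤ) * q1) ((N : ℤ) * q2) (m.1 + t1, m.2 + t2)
      have harg : ((m.1 + t1, m.2 + t2) : ℤ × ℤ)
          + ((M : ℤ) * ((N : ℤ) * q1), (M : ℤ) * ((N : ℤ) * q2)) = x := by
        refine Prod.ext ?_ ?_
        · show m.1 + t1 + (M : ℤ) * ((N : ℤ) * q1) = x.1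
          have he : (M : ℤ) * ((N : ℤ) * q1) = ((N * M : ℕ) : ℤ) * q1 := by
            rw [hLZ]; ring
          linarith
        · show m.2 + t2 + (M : ℤ) * ((N : ℤ) * q2) = x.2
          have he : (M : ℤ) * ((N : ℤ) * q2) = ((N * M : ℕ) : ℤ) * q2 := by
            rw [hLZ]; ring
          linarith
      rw [harg] at hper
      exact hper
    have hcx : c x = c (m.1 + t1, m.2 + t2) := by
      have hper := hcper ((M : ℤ) * q1) ((M : ℤ) * q2) (m.1 + t1, m.2 + t2)
      have harg : ((m.1 + t1, m.2 + t2) : ℤ × ℤ)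
          + ((N : ℤ) * ((M : ℤ) * q1), (N : ℤ) * ((M : ℤ) * q2)) = x := by
        refine Prod.ext ?_ ?_
        · show m.1 + t1 + (N : ℤ) * ((M : ℤ) * q1) = x.1
          have he : (N : ℤ) * ((M : ℤ) * q1) = ((N * M : ℕ) : ℤ) * q1 := by
            rw [hLZ]; ring
          linarith
        · show m.2 + t2 + (N : ℤ) * ((M : ℤ) * q2) = x.2
          have he : (N : ℤ) * ((M : ℤ) * q2) = ((N * M : ℕ) : ℤ) * q2 := by
            rw [hLZ]; ring
          linarith
      rw [harg] at hper
      exact hper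
    rw [hzx, hcx]
    exact hag _ hx'mem
  exact hzdiff fun x _ => heq x
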